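/- arXiv:2208.12313 — 4 statements merged into one kernel-verified Lean document; each statement's English description precedes it below -/
import Mathlib

section
/- Consider the ADMM iteration for the sparse array beamforming problem, generating sequences (w_k, v_k, u_k) for k = 0, 1, 2, …. Then for every k ≥ 1, L(w_{k+1}, v_{k+1}, u_{k+1}) − L(w_k, v_k, u_k) ≤ (4λ_max²(R_x)/ρ − λ_min(R_x) − ρ/2) · ‖v_{k+1} − v_k‖₂², where λ_max(R_x) and λ_min(R_x) are the largest and smallest eigenvalues of R_x. -/
open scoped ComplexOrder

/-- Action of an `M×M` complex matrix on `ℂ^M` (Euclidean space). -/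
noncomputable def mulVecE {M : ℕ} (A : Matrix (Fin M) (Fin M) ℂ)
    (x : EuclideanSpace ℂ (Fin M)) : EuclideanSpace ℂ (Fin M) :=
  WithLp.toLp 2 (fun i => ∑ j, A i j * x j)

variable {M : ℕ}

lemma mulVecE_eq (A : Matrix (Fin M) (Fin M) ℂ) (x : EuclideanSpace ℂ (Fin M)) :
    mulVecE A x = (WithLp.equiv 2 _).symm (A.mulVec (WithLp.equiv 2 _ x)) := rfl

lemma mulVecE_add (A : Matrix (Fin M) (Fin M) ℂ) (x y : EuclideanSpace ℂ (Fin M)) :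
    mulVecE A (x + y) = mulVecE A x + mulVecE A y := by
  simp [mulVecE_eq, Matrix.mulVec_add]

lemma mulVecE_sub (A : Matrix (Fin M) (Fin M) ℂ) (x y : EuclideanSpace ℂ (Fin M)) :
    mulVecE A (x - y) = mulVecE A x - mulVecE A y := by
  simp [mulVecE_eq, Matrix.mulVec_sub]

lemma mulVecE_smul (A : Matrix (Fin M) (Fin M) ℂ) (c : ℂ) (x : EuclideanSpace ℂ (Fin M)) :
    mulVecE A (c • x) = c • mulVecE A x := by
  simp [mulVecE_eq, Matrix.mulVec_smul]

lemma mulVecE_mulVecE (A B : Matrix (Fin M) (Fin M) ℂ) (x : EuclideanSpace ℂ (Fin M)) :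
    mulVecE A (mulVecE B x) = mulVecE (A * B) x := by
  simp [mulVecE_eq, Matrix.mulVec_mulVec]

lemma mulVecE_one (x : EuclideanSpace ℂ (Fin M)) : mulVecE 1 x = x := by
  simp [mulVecE_eq]

lemma mulVecE_add_mat (A B : Matrix (Fin M) (Fin M) ℂ) (x : EuclideanSpace ℂ (Fin M)) :
    mulVecE (A + B) x = mulVecE A x + mulVecE B x := by
  simp [mulVecE_eq, Matrix.add_mulVec]

lemma mulVecE_smul_mat (A : Matrix (Fin M) (Fin M) ℂ) (c : ℂ) (x : EuclideanSpace ℂ (Fin M)) :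
    mulVecE (c • A) x = c • mulVecE A x := by
  simp [mulVecE_eq, Matrix.smul_mulVec]

lemma rinner_eq (x y : EuclideanSpace ℂ (Fin M)) :
    (inner ℝ x y : ℝ) = (inner ℂ x y : ℂ).re := by
  simp [PiLp.inner_apply, Complex.inner, Complex.re_sum]

lemma inner_mulVecE (A : Matrix (Fin M) (Fin M) ℂ) (x y : EuclideanSpace ℂ (Fin M)) :
    (inner ℂ x (mulVecE A y) : ℂ) =
      dotProduct (star (WithLp.equiv 2 _ x)) (A.mulVec (WithLp.equiv 2 _ y)) := by
  rw [EuclideanSpace.inner_eq_star_dotProduct, dotProduct_comm]; rfl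

lemma inner_mulVecE_symm {A : Matrix (Fin M) (Fin M) ℂ} (hA : A.IsHermitian)
    (x y : EuclideanSpace ℂ (Fin M)) :
    (inner ℂ x (mulVecE A y) : ℂ) = (inner ℂ (mulVecE A x) y : ℂ) := by
  rw [inner_mulVecE, EuclideanSpace.inner_eq_star_dotProduct, dotProduct_comm (WithLp.ofLp y)]
  show _ = dotProduct (star (A.mulVec (WithLp.equiv 2 _ x))) (WithLp.equiv 2 _ y)
  rw [Matrix.dotProduct_mulVec, Matrix.star_mulVec, hA.eq]

lemma rinner_mulVecE_symm {A : Matrix (Fin M) (Fin M) ℂ} (hA : A.IsHermitian)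
    (x y : EuclideanSpace ℂ (Fin M)) :
    (inner ℝ x (mulVecE A y) : ℝ) = (inner ℝ (mulVecE A x) y : ℝ) := by
  rw [rinner_eq, rinner_eq, inner_mulVecE_symm hA]

lemma dot_conj (B : Matrix (Fin M) (Fin M) ℂ) (c : Fin M → ℝ) (x : Fin M → ℂ) :
    dotProduct (star x)
      ((B * Matrix.diagonal (fun i => (c i : ℂ)) * B.conjTranspose).mulVec x)
      = ((∑ i, c i * Complex.normSq (B.conjTranspose.mulVec x i) : ℝ) : ℂ) := by
  set y := B.conjTranspose.mulVec x with hy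
  have hsy : star y = Matrix.vecMul (star x) B := by
    rw [hy, Matrix.star_mulVec, Matrix.conjTranspose_conjTranspose]
  rw [← Matrix.mulVec_mulVec, ← Matrix.mulVec_mulVec, Matrix.dotProduct_mulVec, ← hsy, ← hy]
  rw [dotProduct]
  push_cast
  refine Finset.sum_congr rfl fun i _ => ?_
  rw [Matrix.mulVec_diagonal]
  simp only [Pi.star_apply]
  rw [Complex.star_def, show (starRingEnd ℂ) (y i) * ((c i : ℂ) * y i)
      = (c i : ℂ) * ((starRingEnd ℂ) (y i) * y i) by ring,
    show (starRingEnd ℂ) (y i) * y i = Complex.normSq (y i) by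
      rw [mul_comm, Complex.mul_conj]]

section spectral
variable {A : Matrix (Fin M) (Fin M) ℂ} {lmax lmin : ℝ}

lemma spectral_setup (hA : A.PosSemidef) (x : EuclideanSpace ℂ (Fin M)) :
    ∃ y : Fin M → ℂ,
      ‖x‖ ^ 2 = ∑ i, Complex.normSq (y i) ∧
      (inner ℝ x (mulVecE A x) : ℝ) = ∑ i, hA.1.eigenvalues i * Complex.normSq (y i) ∧
      ‖mulVecE A x‖ ^ 2 = ∑ i, (hA.1.eigenvalues i) ^ 2 * Complex.normSq (y i) := by
  classical
  set U : Matrix (Fin M) (Fin M) ℂ := (Matrix.IsHermitian.eigenvectorUnitary hA.1 : Matrix (Fin M) (Fin M) ℂ) with hUdef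
  have hUU : U * star U = 1 := (Matrix.mem_unitaryGroup_iff).mp (Matrix.IsHermitian.eigenvectorUnitary hA.1).2
  have hUU' : star U * U = 1 := (Matrix.mem_unitaryGroup_iff').mp (Matrix.IsHermitian.eigenvectorUnitary hA.1).2
  have hsU : U.conjTranspose = star U := rfl
  set x' : Fin M → ℂ := WithLp.equiv 2 _ x with hx'
  refine ⟨(star U).mulVec x', ?_, ?_, ?_⟩
  · have h1 : dotProduct (star x') (((U * Matrix.diagonal (fun i => ((1:ℝ) : ℂ)) * U.conjTranspose)).mulVec x')
        = ((∑ i, (1:ℝ) * Complex.normSq ((U.conjTranspose.mulVec x') i) : ℝ) : ℂ) :=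
      dot_conj U (fun _ => (1:ℝ)) x'
    rw [show Matrix.diagonal (fun _ : Fin M => ((1:ℝ) : ℂ)) = 1 by simp, Matrix.mul_one, hsU, hUU] at h1
    have h2 : (inner ℂ x x : ℂ) = dotProduct (star x') x' :=
      by rw [EuclideanSpace.inner_eq_star_dotProduct, dotProduct_comm]; rfl
    have h3 : ‖x‖ ^ 2 = (inner ℂ x x : ℂ).re := by
      rw [← rinner_eq, real_inner_self_eq_norm_sq]
    rw [h3, h2, show dotProduct (star x') x'
        = dotProduct (star x') ((1 : Matrix (Fin M) (Fin M) ℂ).mulVec x') by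
        rw [Matrix.one_mulVec], h1]
    rw [Complex.ofReal_re]
    simp [hsU]
  · have h1 := dot_conj U (hA.1.eigenvalues) x'
    have hsp : A = U * Matrix.diagonal (fun i => ((hA.1.eigenvalues i : ℝ) : ℂ)) * U.conjTranspose := by
      rw [hsU]; exact hA.1.spectral_theorem
    have h2 : (inner ℂ x (mulVecE A x) : ℂ) = dotProduct (star x') (A.mulVec x') := inner_mulVecE A x x
    rw [← hsp] at h1
    rw [rinner_eq, h2, h1, Complex.ofReal_re]
    simp [hsU]
  · have hAA : A * A = U * Matrix.diagonal (fun i => ((hA.1.eigenvalues i ^ 2 : ℝ) : ℂ)) * U.conjTranspose := by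
      have hsp : A = U * Matrix.diagonal (fun i => ((hA.1.eigenvalues i : ℝ) : ℂ)) * U.conjTranspose := by
        rw [hsU]; exact hA.1.spectral_theorem
      rw [hsU]
      calc A * A = U * Matrix.diagonal (fun i => ((hA.1.eigenvalues i : ℝ) : ℂ)) * star U *
            (U * Matrix.diagonal (fun i => ((hA.1.eigenvalues i : ℝ) : ℂ)) * star U) := by
            rw [hsU] at hsp; rw [← hsp]
        _ = U * (Matrix.diagonal (fun i => ((hA.1.eigenvalues i : ℝ) : ℂ)) * ((star U * U) *
              (Matrix.diagonal (fun i => ((hA.1.eigenvalues i : ℝ) : ℂ)) * star U))) := by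
            simp only [Matrix.mul_assoc]
        _ = U * Matrix.diagonal (fun i => ((hA.1.eigenvalues i ^ 2 : ℝ) : ℂ)) * star U := by
            rw [hUU', Matrix.one_mul, ← Matrix.mul_assoc (Matrix.diagonal _)
              (Matrix.diagonal _) (star U), Matrix.diagonal_mul_diagonal]
            simp only [Matrix.mul_assoc]
            congr 1
            ext i j
            push_cast
            ring_nf
    have h1 := dot_conj U (fun i => hA.1.eigenvalues i ^ 2) x'
    have h2 : ‖mulVecE A x‖ ^ 2 = (inner ℂ (mulVecE A x) (mulVecE A x) : ℂ).re := by
      rw [← rinner_eq, real_inner_self_eq_norm_sq]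
    have h3 : (inner ℂ (mulVecE A x) (mulVecE A x) : ℂ)
        = dotProduct (star (A.mulVec x')) (A.mulVec x') := by
      rw [EuclideanSpace.inner_eq_star_dotProduct, dotProduct_comm]; rfl
    have h4 : dotProduct (star (A.mulVec x')) (A.mulVec x')
        = dotProduct (star x') ((A * A).mulVec x') := by
      rw [Matrix.star_mulVec, hA.1.eq, ← Matrix.mulVec_mulVec, Matrix.dotProduct_mulVec,
        Matrix.dotProduct_mulVec, Matrix.dotProduct_mulVec, Matrix.vecMul_vecMul]
    rw [h2, h3, h4, hAA, h1, Complex.ofReal_re]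
    simp [hsU]

end spectral

lemma quad_lower {A : Matrix (Fin M) (Fin M) ℂ} {lmin : ℝ} (hA : A.PosSemidef)
    (hlmin : IsLeast (Set.range hA.1.eigenvalues) lmin) (x : EuclideanSpace ℂ (Fin M)) :
    lmin * ‖x‖ ^ 2 ≤ (inner ℝ x (mulVecE A x) : ℝ) := by
  obtain ⟨y, h1, h2, -⟩ := spectral_setup hA x
  rw [h1, h2, Finset.mul_sum]
  refine Finset.sum_le_sum fun i _ => ?_
  exact mul_le_mul_of_nonneg_right (hlmin.2 ⟨i, rfl⟩) (Complex.normSq_nonneg _)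

lemma norm_mulVecE_sq_le {A : Matrix (Fin M) (Fin M) ℂ} {lmax : ℝ} (hA : A.PosSemidef)
    (hlmax : IsGreatest (Set.range hA.1.eigenvalues) lmax) (x : EuclideanSpace ℂ (Fin M)) :
    ‖mulVecE A x‖ ^ 2 ≤ lmax ^ 2 * ‖x‖ ^ 2 := by
  obtain ⟨y, h1, -, h3⟩ := spectral_setup hA x
  rw [h1, h3, Finset.mul_sum]
  refine Finset.sum_le_sum fun i _ => ?_
  refine mul_le_mul_of_nonneg_right ?_ (Complex.normSq_nonneg _)
  exact pow_le_pow_left₀ (hA.eigenvalues_nonneg i) (hlmax.2 ⟨i, rfl⟩) 2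

lemma B_posDef {Rx : Matrix (Fin M) (Fin M) ℂ} (hRx : Rx.PosSemidef) {ρ : ℝ} (hρ : 0 < ρ) :
    (2 • Rx + (ρ : ℂ) • 1).PosDef := by
  have h1 : ((ρ : ℂ) • (1 : Matrix (Fin M) (Fin M) ℂ)).PosDef := by
    rw [Matrix.smul_one_eq_diagonal]
    exact Matrix.posDef_diagonal_iff.mpr fun _ => Complex.zero_lt_real.mpr hρ
  have h2 : (2 • Rx).PosSemidef := by
    rw [two_smul]; exact hRx.add hRx
  exact Matrix.PosDef.posSemidef_add h2 h1

/-- Augmented Lagrangian `L(w,v,u) = λ‖w‖₁ + vᴴR_x v + (ρ/2)(‖w−v+u‖₂² − ‖u‖₂²)`. -/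
noncomputable def lagr {M : ℕ} (Rx : Matrix (Fin M) (Fin M) ℂ) (lam ρ : ℝ)
    (w v u : EuclideanSpace ℂ (Fin M)) : ℝ :=
  lam * ∑ i, ‖w i‖ + (inner ℂ v (mulVecE Rx v) : ℂ).re
    + ρ / 2 * (‖w - v + u‖ ^ 2 - ‖u‖ ^ 2)

/-- Along the ADMM iteration for the sparse array beamforming problem, for every
`k ≥ 1`, `L_{k+1} − L_k ≤ (4λ_max²(R_x)/ρ − λ_min(R_x) − ρ/2)‖v_{k+1} − v_k‖₂²`. -/
theorem admm_lagrangian_descent_bound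
    {M : ℕ} (lam ρ : ℝ) (hlam : 0 < lam) (hρ : 0 < ρ)
    (Rx : Matrix (Fin M) (Fin M) ℂ) (hRx : Rx.PosSemidef)
    (a0 : EuclideanSpace ℂ (Fin M)) (ha0 : a0 ≠ 0)
    (lmax lmin : ℝ)
    (hlmax : IsGreatest (Set.range hRx.1.eigenvalues) lmax)
    (hlmin : IsLeast (Set.range hRx.1.eigenvalues) lmin)
    (w v u : ℕ → EuclideanSpace ℂ (Fin M))
    (hw : ∀ k : ℕ, 1 ≤ ‖(inner ℂ a0 (w (k + 1)) : ℂ)‖ ^ 2 ∧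
      ∀ x : EuclideanSpace ℂ (Fin M), 1 ≤ ‖(inner ℂ a0 x : ℂ)‖ ^ 2 →
        lam * ∑ i, ‖w (k + 1) i‖ + ρ / 2 * ‖w (k + 1) - v k + u k‖ ^ 2 ≤
        lam * ∑ i, ‖x i‖ + ρ / 2 * ‖x - v k + u k‖ ^ 2)
    (hv : ∀ k : ℕ, v (k + 1) = (ρ : ℂ) • mulVecE (2 • Rx + (ρ : ℂ) • 1)⁻¹ (w (k + 1) + u k))
    (hu : ∀ k : ℕ, u (k + 1) = u k + w (k + 1) - v (k + 1)) :
    ∀ k : ℕ, 1 ≤ k →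
      lagr Rx lam ρ (w (k + 1)) (v (k + 1)) (u (k + 1)) -
        lagr Rx lam ρ (w k) (v k) (u k) ≤
      (4 * lmax ^ 2 / ρ - lmin - ρ / 2) * ‖v (k + 1) - v k‖ ^ 2 := by
  intro k hk
  obtain ⟨m, rfl⟩ : ∃ m, k = m + 1 := ⟨k - 1, (Nat.succ_pred_eq_of_pos hk).symm⟩
  set B : Matrix (Fin M) (Fin M) ℂ := 2 • Rx + (ρ : ℂ) • 1 with hBdef
  have hB : B.PosDef := B_posDef hRx hρ
  have hBinv : B * B⁻¹ = 1 :=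
    Matrix.mul_nonsing_inv _ ((Matrix.isUnit_iff_isUnit_det B).mp hB.isUnit)
  -- the v-update optimality equation
  have hVeq : ∀ j : ℕ, mulVecE Rx (v (j+1)) + mulVecE Rx (v (j+1)) + (ρ:ℂ) • v (j+1)
      = (ρ:ℂ) • (w (j+1) + u j) := by
    intro j
    have h := congrArg (mulVecE B) (hv j)
    rw [mulVecE_smul, mulVecE_mulVecE, hBinv, mulVecE_one] at h
    rw [← h, hBdef, show (2 • Rx + (ρ:ℂ) • 1 : Matrix (Fin M) (Fin M) ℂ)
        = Rx + Rx + (ρ:ℂ) • 1 by rw [two_smul]]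
    rw [mulVecE_add_mat, mulVecE_add_mat, mulVecE_smul_mat, mulVecE_one]
  have hUeq : ∀ j : ℕ, (ρ:ℂ) • u (j+1) = mulVecE Rx (v (j+1)) + mulVecE Rx (v (j+1)) := by
    intro j
    rw [hu j]
    calc (ρ:ℂ) • (u j + w (j+1) - v (j+1))
        = (ρ:ℂ) • (w (j+1) + u j) - (ρ:ℂ) • v (j+1) := by
          rw [← smul_sub, add_comm (u j)]
      _ = mulVecE Rx (v (j+1)) + mulVecE Rx (v (j+1)) := by rw [← hVeq j]; abel
  set W := w (m+2) with hW
  set V := v (m+2) with hV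
  set V0 := v (m+1) with hV0
  set U1 := u (m+2) with hU1
  set U0 := u (m+1) with hU0
  set d : EuclideanSpace ℂ (Fin M) := V - V0 with hd
  set e : EuclideanSpace ℂ (Fin M) := U1 - U0 with he
  -- dual-residual bound
  have heq : (ρ:ℂ) • e = mulVecE Rx d + mulVecE Rx d := by
    rw [he, hd, smul_sub, hU1, hU0, hUeq (m+1), hUeq m, mulVecE_sub]
    abel
  have hnorm_e : ρ * ‖e‖ ^ 2 ≤ 4 * lmax ^ 2 / ρ * ‖d‖ ^ 2 := by
    have h1 : ‖(ρ:ℂ) • e‖ ^ 2 = ρ ^ 2 * ‖e‖ ^ 2 := by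
      rw [norm_smul, Complex.norm_real, Real.norm_eq_abs, mul_pow, sq_abs]
    have h2 : mulVecE Rx d + mulVecE Rx d = (2:ℝ) • mulVecE Rx d := (two_smul ℝ _).symm
    have h3 : ‖mulVecE Rx d + mulVecE Rx d‖ ^ 2 = 4 * ‖mulVecE Rx d‖ ^ 2 := by
      rw [h2, norm_smul, Real.norm_ofNat]
      ring
    have h4 : ‖mulVecE Rx d‖ ^ 2 ≤ lmax ^ 2 * ‖d‖ ^ 2 := norm_mulVecE_sq_le hRx hlmax d
    have h5 : ρ ^ 2 * ‖e‖ ^ 2 ≤ 4 * (lmax ^ 2 * ‖d‖ ^ 2) := by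
      rw [← h1, heq, h3]; linarith
    rw [div_mul_eq_mul_div, le_div_iff₀ hρ]
    nlinarith
  -- Step 1 : w-minimization
  have S1 : lam * ∑ i, ‖W i‖ + ρ / 2 * ‖W - V0 + U0‖ ^ 2 ≤
      lam * ∑ i, ‖w (m+1) i‖ + ρ / 2 * ‖w (m+1) - V0 + U0‖ ^ 2 :=
    (hw (m+1)).2 (w (m+1)) (hw m).1
  -- Step 2 : v-minimization (strong convexity)
  set d' : EuclideanSpace ℂ (Fin M) := V0 - V with hd'
  have hdd : ‖d'‖ = ‖d‖ := by
    rw [hd', hd, show V0 - V = -(V - V0) by abel, norm_neg]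
  have hv0 : V0 = V + d' := by rw [hd']; abel
  have hn : ‖W - V0 + U0‖ ^ 2
      = ‖W - V + U0‖ ^ 2 - 2 * (inner ℝ (W - V + U0) d' : ℝ) + ‖d'‖ ^ 2 := by
    rw [show W - V0 + U0 = (W - V + U0) - d' by rw [hv0]; abel, norm_sub_sq_real]
  have hq : (inner ℝ V0 (mulVecE Rx V0) : ℝ)
      = (inner ℝ V (mulVecE Rx V) : ℝ) + 2 * (inner ℝ d' (mulVecE Rx V) : ℝ)
        + (inner ℝ d' (mulVecE Rx d') : ℝ) := by
    rw [hv0, mulVecE_add, inner_add_left, inner_add_right, inner_add_right]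
    have hsym : (inner ℝ V (mulVecE Rx d') : ℝ) = (inner ℝ d' (mulVecE Rx V) : ℝ) := by
      rw [rinner_mulVecE_symm hRx.1, real_inner_comm]
    linarith
  have hcross : 2 * (inner ℝ d' (mulVecE Rx V) : ℝ) = ρ * (inner ℝ (W - V + U0) d' : ℝ) := by
    have hWVU : (ρ:ℂ) • (W - V + U0) = mulVecE Rx V + mulVecE Rx V := by
      have : W - V + U0 = U1 := by rw [hU1, hu (m+1)]; abel
      rw [this, hU1, hUeq (m+1)]
    calc 2 * (inner ℝ d' (mulVecE Rx V) : ℝ)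
        = (inner ℝ (mulVecE Rx V + mulVecE Rx V) d' : ℝ) := by
          rw [inner_add_left, real_inner_comm]; ring
      _ = (inner ℝ ((ρ:ℂ) • (W - V + U0)) d' : ℝ) := by rw [hWVU]
      _ = ρ * (inner ℝ (W - V + U0) d' : ℝ) := by
          rw [Complex.coe_smul]
          exact real_inner_smul_left _ _ _
  have S2 : (inner ℝ V (mulVecE Rx V) : ℝ) + ρ / 2 * ‖W - V + U0‖ ^ 2 ≤
      (inner ℝ V0 (mulVecE Rx V0) : ℝ) + ρ / 2 * ‖W - V0 + U0‖ ^ 2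
        - (lmin + ρ / 2) * ‖d‖ ^ 2 := by
    have hlow : lmin * ‖d'‖ ^ 2 ≤ (inner ℝ d' (mulVecE Rx d') : ℝ) := quad_lower hRx hlmin d'
    have hid : (inner ℝ V0 (mulVecE Rx V0) : ℝ) + ρ / 2 * ‖W - V0 + U0‖ ^ 2
        - (inner ℝ V (mulVecE Rx V) : ℝ) - ρ / 2 * ‖W - V + U0‖ ^ 2
        = (inner ℝ d' (mulVecE Rx d') : ℝ) + ρ / 2 * ‖d'‖ ^ 2 := by
      linear_combination hq + ρ / 2 * hn + hcross
    have hexp : (lmin + ρ / 2) * ‖d‖ ^ 2 = lmin * ‖d'‖ ^ 2 + ρ / 2 * ‖d'‖ ^ 2 := by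
      rw [hdd]; ring
    linarith
  -- Step 3 : u-update
  have S3 : ρ / 2 * (‖W - V + U1‖ ^ 2 - ‖U1‖ ^ 2) - ρ / 2 * (‖W - V + U0‖ ^ 2 - ‖U0‖ ^ 2)
      = ρ * ‖e‖ ^ 2 := by
    have hWV : W - V = e := by rw [he, hU1, hU0, hu (m+1)]; abel
    have h1 : W - V + U1 = e + U1 := by rw [hWV]
    have h2 : W - V + U0 = U1 := by rw [hWV, he]; abel
    have h3 : ‖U0‖ ^ 2 = ‖U1‖ ^ 2 - 2 * (inner ℝ U1 e : ℝ) + ‖e‖ ^ 2 := by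
      rw [show U0 = U1 - e by rw [he]; abel, norm_sub_sq_real]
    have h4 : ‖e + U1‖ ^ 2 = ‖e‖ ^ 2 + 2 * (inner ℝ e U1 : ℝ) + ‖U1‖ ^ 2 := norm_add_sq_real _ _
    have hcomm : (inner ℝ e U1 : ℝ) = (inner ℝ U1 e : ℝ) := real_inner_comm _ _
    rw [h1, h2]
    linear_combination ρ / 2 * h4 + ρ / 2 * h3 + ρ * hcomm
  -- assemble
  simp only [lagr]
  rw [← rinner_eq, ← rinner_eq]
  have hRHS : (4 * lmax ^ 2 / ρ - lmin - ρ / 2) * ‖d‖ ^ 2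
      = 4 * lmax ^ 2 / ρ * ‖d‖ ^ 2 - (lmin + ρ / 2) * ‖d‖ ^ 2 := by
    ring
  linarith
end

section
/- (Lemma 1, monotonicity) Consider the ADMM iteration for the sparse array beamforming problem, generating sequences (w_k, v_k, u_k) for k = 0, 1, 2, …. If the augmented Lagrangian parameter satisfies ρ ≥ 2√2 · λ_max(R_x), then the objective function value sequence is monotonically non-increasing: L(w_{k+1}, v_{k+1}, u_{k+1}) ≤ L(w_k, v_k, u_k) for all k ≥ 1. -/
open scoped ComplexOrder
open scoped Matrix

set_option maxHeartbeats 1000000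

lemma aux_resymm {M : ℕ} (a b : EuclideanSpace ℂ (Fin M)) :
    (inner ℂ a b : ℂ).re = (inner ℂ b a : ℂ).re := by
  rw [← inner_conj_symm b a]; exact Complex.conj_re _

/-- Operator norm bound from the largest eigenvalue, for a PSD Hermitian matrix. -/
lemma aux_norm_mulVecE_le {M : ℕ} {Rx : Matrix (Fin M) (Fin M) ℂ} (hRx : Rx.PosSemidef)
    {lmax : ℝ} (hlmax : IsGreatest (Set.range hRx.1.eigenvalues) lmax)
    (x : EuclideanSpace ℂ (Fin M)) : ‖mulVecE Rx x‖ ≤ lmax * ‖x‖ := by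
  obtain ⟨i0, hi0⟩ := hlmax.1
  have hl0 : 0 ≤ lmax := hi0 ▸ hRx.eigenvalues_nonneg i0
  set b := hRx.1.eigenvectorBasis with hb
  have hrepr : ∀ i, b.repr (mulVecE Rx x) i = (hRx.1.eigenvalues i : ℂ) * b.repr x i := by
    intro i
    rw [b.repr_apply_apply, b.repr_apply_apply]
    have hsym := Matrix.isHermitian_iff_isSymmetric.1 hRx.1
    have h1 : (inner ℂ (b i) (mulVecE Rx x) : ℂ) = inner ℂ (mulVecE Rx (b i)) x :=
      (hsym (b i) x).symm
    have hev : mulVecE Rx (b i) = (hRx.1.eigenvalues i : ℝ) • b i :=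
      congrArg (WithLp.toLp 2) (hRx.1.mulVec_eigenvectorBasis i)
    rw [h1, hev, RCLike.real_smul_eq_coe_smul (K := ℂ), inner_smul_left]
    simp
  have hnorm : ‖mulVecE Rx x‖ = ‖b.repr (mulVecE Rx x)‖ := (b.repr.norm_map _).symm
  have hnorm2 : ‖x‖ = ‖b.repr x‖ := (b.repr.norm_map _).symm
  rw [hnorm, hnorm2, EuclideanSpace.norm_eq, EuclideanSpace.norm_eq,
    ← Real.sqrt_sq hl0, ← Real.sqrt_mul (sq_nonneg lmax)]
  apply Real.sqrt_le_sqrt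
  rw [Finset.mul_sum]
  apply Finset.sum_le_sum
  intro i _
  rw [hrepr i, norm_mul]
  have hlam2 : ‖((hRx.1.eigenvalues i : ℝ) : ℂ)‖ = hRx.1.eigenvalues i := by
    rw [Complex.norm_real, Real.norm_eq_abs, abs_of_nonneg (hRx.eigenvalues_nonneg i)]
  rw [hlam2]
  have hle : hRx.1.eigenvalues i ≤ lmax := hlmax.2 (Set.mem_range_self i)
  have h0 : 0 ≤ hRx.1.eigenvalues i := hRx.eigenvalues_nonneg i
  have hn : (0:ℝ) ≤ ‖b.repr x i‖ := norm_nonneg _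
  have := mul_le_mul_of_nonneg_right hle hn
  nlinarith [mul_le_mul this this (mul_nonneg h0 hn) (mul_nonneg hl0 hn)]

/-- Exact decrease identity for the (strongly convex) quadratic `v`-subproblem. -/
lemma aux_vstep {M : ℕ} (T : EuclideanSpace ℂ (Fin M) →ₗ[ℂ] EuclideanSpace ℂ (Fin M))
    (hsym : T.IsSymmetric) (ρ : ℝ) (g vold vnew : EuclideanSpace ℂ (Fin M))
    (hopt : (ρ:ℂ) • (g - vnew) = (2:ℂ) • T vnew) :
    (inner ℂ vold (T vold) : ℂ).re + ρ/2 * ‖g - vold‖^2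
      = (inner ℂ vnew (T vnew) : ℂ).re + ρ/2 * ‖g - vnew‖^2
        + ((inner ℂ (vold - vnew) (T (vold - vnew)) : ℂ).re + ρ/2 * ‖vold - vnew‖^2) := by
  set d := vold - vnew with hd
  have hvold : vold = vnew + d := by rw [hd]; abel
  have hge : g - vold = (g - vnew) - d := by rw [hd]; abel
  have hn1 : ‖g - vold‖^2 = ‖g - vnew‖^2 - 2 * (inner ℂ (g - vnew) d : ℂ).re + ‖d‖^2 := by
    rw [hge]
    have := norm_sub_sq (𝕜 := ℂ) (g - vnew) d
    simpa [inner_sub_left] using this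
  have hq : (inner ℂ vold (T vold) : ℂ).re
      = (inner ℂ vnew (T vnew) : ℂ).re + 2 * (inner ℂ d (T vnew) : ℂ).re
        + (inner ℂ d (T d) : ℂ).re := by
    rw [hvold, map_add, inner_add_left, inner_add_right, inner_add_right]
    have h1 : (inner ℂ vnew (T d) : ℂ).re = (inner ℂ d (T vnew) : ℂ).re := by
      rw [← hsym vnew d]; exact aux_resymm _ _
    simp only [Complex.add_re]
    linarith [h1]
  have hopt2 : ρ * (inner ℂ (g - vnew) d : ℂ).re = 2 * (inner ℂ d (T vnew) : ℂ).re := by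
    have h := congrArg (fun y => (inner ℂ d y : ℂ)) hopt
    simp only [inner_smul_right] at h
    have hre := congrArg Complex.re h
    simp only [Complex.mul_re, Complex.ofReal_re, Complex.ofReal_im, Complex.re_ofNat,
      Complex.im_ofNat, zero_mul, sub_zero, mul_zero] at hre
    rw [aux_resymm (g - vnew) d]
    linarith [hre]
  rw [hn1, hq]
  ring_nf
  ring_nf at hopt2
  linarith [hopt2]

/-- Exact increase identity for the dual (`u`) update. -/
lemma aux_ustep {M : ℕ} (r u : EuclideanSpace ℂ (Fin M)) :
    ‖r + (u + r)‖^2 - ‖u + r‖^2 - (‖r + u‖^2 - ‖u‖^2) = 2 * ‖r‖^2 := by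
  have e1 : r + (u + r) = (u + r) + r := by abel
  have e2 : r + u = u + r := by abel
  rw [e1, e2]
  have h1 := norm_add_sq (𝕜 := ℂ) (u + r) r
  have h2 := norm_add_sq (𝕜 := ℂ) u r
  have h3 : (inner ℂ (u + r) r : ℂ).re = (inner ℂ u r : ℂ).re + (inner ℂ r r : ℂ).re := by
    rw [inner_add_left]; simp
  have h4 : (inner ℂ r r : ℂ).re = ‖r‖^2 := inner_self_eq_norm_sq (𝕜 := ℂ) r
  simp only [RCLike.re_to_complex] at h1 h2
  linarith

/-- Lemma 1, monotonicity: If `ρ ≥ 2√2·λ_max(R_x)`, the augmented Lagrangian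
value sequence generated by the ADMM iteration is monotonically non-increasing for `k ≥ 1`. -/
theorem admm_lagrangian_monotone
    {M : ℕ} (lam ρ : ℝ) (hlam : 0 < lam) (hρ : 0 < ρ)
    (Rx : Matrix (Fin M) (Fin M) ℂ) (hRx : Rx.PosSemidef)
    (a0 : EuclideanSpace ℂ (Fin M)) (ha0 : a0 ≠ 0)
    (lmax : ℝ)
    (hlmax : IsGreatest (Set.range hRx.1.eigenvalues) lmax)
    (hρ_big : 2 * Real.sqrt 2 * lmax ≤ ρ)
    (w v u : ℕ → EuclideanSpace ℂ (Fin M))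
    (hw : ∀ k : ℕ, 1 ≤ ‖(inner ℂ a0 (w (k + 1)) : ℂ)‖ ^ 2 ∧
      ∀ x : EuclideanSpace ℂ (Fin M), 1 ≤ ‖(inner ℂ a0 x : ℂ)‖ ^ 2 →
        lam * ∑ i, ‖w (k + 1) i‖ + ρ / 2 * ‖w (k + 1) - v k + u k‖ ^ 2 ≤
        lam * ∑ i, ‖x i‖ + ρ / 2 * ‖x - v k + u k‖ ^ 2)
    (hv : ∀ k : ℕ, v (k + 1) = (ρ : ℂ) • mulVecE (2 • Rx + (ρ : ℂ) • 1)⁻¹ (w (k + 1) + u k))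
    (hu : ∀ k : ℕ, u (k + 1) = u k + w (k + 1) - v (k + 1)) :
    ∀ k : ℕ, 1 ≤ k →
      lagr Rx lam ρ (w (k + 1)) (v (k + 1)) (u (k + 1)) ≤
        lagr Rx lam ρ (w k) (v k) (u k) := by
  have hT : ∀ x : EuclideanSpace ℂ (Fin M), mulVecE Rx x = Matrix.toEuclideanLin Rx x :=
    fun _ => rfl
  set T : EuclideanSpace ℂ (Fin M) →ₗ[ℂ] EuclideanSpace ℂ (Fin M) := Matrix.toEuclideanLin Rx
    with hTdef
  have hTE : ∀ x : EuclideanSpace ℂ (Fin M), mulVecE Rx x = T x := hT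
  have hsym : T.IsSymmetric := Matrix.isHermitian_iff_isSymmetric.1 hRx.1
  have hl0 : 0 ≤ lmax := by
    obtain ⟨i0, hi0⟩ := hlmax.1
    exact hi0 ▸ hRx.eigenvalues_nonneg i0
  -- invertibility of the `v`-update matrix
  have hpd : (2 • Rx + (ρ:ℂ) • 1).PosDef := by
    have h1 : ((ρ:ℂ) • (1 : Matrix (Fin M) (Fin M) ℂ)).PosDef := by
      rw [Matrix.smul_one_eq_diagonal]
      exact Matrix.posDef_diagonal_iff.mpr fun i => Complex.zero_lt_real.mpr hρ
    have h2 : (2 • Rx).PosSemidef := by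
      rw [two_smul]; exact hRx.add hRx
    exact Matrix.PosDef.posSemidef_add h2 h1
  have hAeq : ∀ m : ℕ, mulVecE (2 • Rx + (ρ:ℂ) • 1) (v (m+1))
      = (ρ:ℂ) • (w (m+1) + u m) := by
    intro m
    rw [hv m]
    apply WithLp.ofLp_injective
    show (2 • Rx + (ρ:ℂ) • 1) *ᵥ ((ρ:ℂ) • ((2 • Rx + (ρ:ℂ) • 1)⁻¹ *ᵥ
        (WithLp.ofLp (w (m+1) + u m))))
      = (ρ:ℂ) • (WithLp.ofLp (w (m+1) + u m))
    rw [Matrix.mulVec_smul, Matrix.mulVec_mulVec,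
      Matrix.mul_nonsing_inv _ hpd.det_pos.ne'.isUnit, Matrix.one_mulVec]
  have hopt : ∀ m : ℕ, (ρ:ℂ) • ((w (m+1) + u m) - v (m+1)) = (2:ℂ) • T (v (m+1)) := by
    intro m
    have h := hAeq m
    have hexp : mulVecE (2 • Rx + (ρ:ℂ) • 1) (v (m+1))
        = (2:ℂ) • T (v (m+1)) + (ρ:ℂ) • v (m+1) := by
      apply WithLp.ofLp_injective
      show (2 • Rx + (ρ:ℂ) • 1) *ᵥ (WithLp.ofLp (v (m+1)))
        = (2:ℂ) • (Rx *ᵥ (WithLp.ofLp (v (m+1))))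
          + (ρ:ℂ) • (WithLp.ofLp (v (m+1)))
      rw [Matrix.add_mulVec, Matrix.smul_mulVec ((ρ:ℂ)) (1 : Matrix (Fin M) (Fin M) ℂ),
        Matrix.one_mulVec, ← Nat.cast_smul_eq_nsmul ℂ 2 Rx, Matrix.smul_mulVec]
      norm_num
    rw [hexp] at h
    rw [smul_sub, ← h]
    abel
  have hukey : ∀ m : ℕ, (ρ:ℂ) • u (m+1) = (2:ℂ) • T (v (m+1)) := by
    intro m
    rw [hu m, show u m + w (m+1) - v (m+1) = (w (m+1) + u m) - v (m+1) from by abel, hopt m]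
  intro k hk
  obtain ⟨j, rfl⟩ : ∃ j, k = j + 1 := ⟨k - 1, (Nat.succ_pred_eq_of_pos hk).symm⟩
  set n := j + 1 with hn
  -- Step 1 : the w-update does not increase L
  have step1 : lagr Rx lam ρ (w (n+1)) (v n) (u n) ≤ lagr Rx lam ρ (w n) (v n) (u n) := by
    have hfeas : 1 ≤ ‖(inner ℂ a0 (w n) : ℂ)‖ ^ 2 := by
      rw [hn]; exact (hw j).1
    have hmin := (hw n).2 (w n) hfeas
    simp only [lagr, mul_sub]
    linarith [hmin]
  -- PSD quadratic form is nonneg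
  have hpsd : 0 ≤ (inner ℂ (v n - v (n+1)) (T (v n - v (n+1))) : ℂ).re := by
    have h := hRx.re_dotProduct_nonneg (v n - v (n+1))
    have heq := EuclideanSpace.inner_eq_star_dotProduct (v n - v (n+1)) (T (v n - v (n+1)))
    rw [heq, dotProduct_comm]
    exact h
  -- Step 2 : the v-update decreases L by at least (ρ/2)‖Δv‖²
  have step2 : lagr Rx lam ρ (w (n+1)) (v (n+1)) (u n)
      ≤ lagr Rx lam ρ (w (n+1)) (v n) (u n) - ρ/2 * ‖v n - v (n+1)‖^2 := by
    have hid := aux_vstep T hsym ρ (w (n+1) + u n) (v n) (v (n+1)) (hopt n)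
    simp only [lagr, hTE, mul_sub]
    rw [show w (n+1) - v n + u n = (w (n+1) + u n) - v n from by abel,
      show w (n+1) - v (n+1) + u n = (w (n+1) + u n) - v (n+1) from by abel]
    linarith [hid, hpsd]
  -- Step 3 : the u-update increases L by exactly ρ‖r‖²
  have step3 : lagr Rx lam ρ (w (n+1)) (v (n+1)) (u (n+1))
      = lagr Rx lam ρ (w (n+1)) (v (n+1)) (u n) + ρ * ‖w (n+1) - v (n+1)‖^2 := by
    simp only [lagr]
    rw [hu n]
    rw [show w (n+1) - v (n+1) + (u n + w (n+1) - v (n+1))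
        = (w (n+1) - v (n+1)) + (u n + (w (n+1) - v (n+1))) from by abel]
    rw [show u n + w (n+1) - v (n+1) = u n + (w (n+1) - v (n+1)) from by abel]
    linear_combination (ρ/2) * aux_ustep (w (n+1) - v (n+1)) (u n)
  -- Step 4 : bound the dual residual by the primal change
  have hrd : (ρ:ℂ) • (w (n+1) - v (n+1)) = (2:ℂ) • T (v (n+1) - v n) := by
    have h1 := hukey n
    have h2 : (ρ:ℂ) • u n = (2:ℂ) • T (v n) := by
      rw [hn]; exact hukey j
    have h3 : w (n+1) - v (n+1) = u (n+1) - u n := by rw [hu n]; abel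
    rw [h3, smul_sub, h1, h2, ← smul_sub, ← map_sub]
  have hnr : ρ * ‖w (n+1) - v (n+1)‖ ≤ 2 * lmax * ‖v n - v (n+1)‖ := by
    have h1 : ‖(ρ:ℂ) • (w (n+1) - v (n+1))‖ = ρ * ‖w (n+1) - v (n+1)‖ := by
      rw [norm_smul, Complex.norm_real, Real.norm_eq_abs, abs_of_pos hρ]
    have h2 : ‖(2:ℂ) • T (v (n+1) - v n)‖ = 2 * ‖T (v (n+1) - v n)‖ := by
      rw [norm_smul]; norm_num
    have h3 : ‖T (v (n+1) - v n)‖ ≤ lmax * ‖v (n+1) - v n‖ := by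
      rw [← hTE]
      exact aux_norm_mulVecE_le hRx hlmax (v (n+1) - v n)
    have h4 : ‖v (n+1) - v n‖ = ‖v n - v (n+1)‖ := norm_sub_rev _ _
    calc ρ * ‖w (n+1) - v (n+1)‖ = ‖(ρ:ℂ) • (w (n+1) - v (n+1))‖ := h1.symm
      _ = 2 * ‖T (v (n+1) - v n)‖ := by rw [hrd, h2]
      _ ≤ 2 * (lmax * ‖v (n+1) - v n‖) := by linarith [h3]
      _ = 2 * lmax * ‖v n - v (n+1)‖ := by rw [h4]; ring
  have step4 : ρ * ‖w (n+1) - v (n+1)‖^2 ≤ ρ/2 * ‖v n - v (n+1)‖^2 := by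
    have hs2 : Real.sqrt 2 ^ 2 = 2 := Real.sq_sqrt (by norm_num)
    have hsq8 : (2 * Real.sqrt 2 * lmax)^2 = 8 * lmax^2 := by
      rw [mul_pow, mul_pow, hs2]; ring
    have hkey : (2 * Real.sqrt 2 * lmax) * (2 * Real.sqrt 2 * lmax) ≤ ρ * ρ :=
      mul_le_mul hρ_big hρ_big (by positivity) hρ.le
    have h8 : 8 * lmax^2 ≤ ρ^2 := by nlinarith [hkey, hsq8]
    have hrn : 0 ≤ ‖w (n+1) - v (n+1)‖ := norm_nonneg _
    have hdn : 0 ≤ ‖v n - v (n+1)‖ := norm_nonneg _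
    have hsq : (ρ * ‖w (n+1) - v (n+1)‖)^2 ≤ (2 * lmax * ‖v n - v (n+1)‖)^2 := by
      nlinarith [hnr, mul_nonneg (le_of_lt hρ) hrn, mul_nonneg (mul_nonneg (by norm_num : (0:ℝ) ≤ 2) hl0) hdn]
    nlinarith [hsq, h8, sq_nonneg ‖v n - v (n+1)‖, sq_nonneg ‖w (n+1) - v (n+1)‖, hρ]
  linarith [step1, step2, step3, step4]
end

section
/- (Lemma 2, boundedness) Let R_x be an M×M Hermitian positive definite matrix with largest eigenvalue λ_max(R_x) and smallest eigenvalue λ_min(R_x) > 0, let λ ≥ 0, and let ρ > 0 satisfy ρ ≥ 2λ_max²(R_x)/λ_min(R_x). Then for all w, v ∈ ℂ^M, taking u = (2/ρ) R_x v, the augmented Lagrangian satisfies L(w, v, u) = λ‖w‖₁ + vᴴR_x v + (ρ/2)(‖w − v + u‖₂² − ‖u‖₂²) ≥ 0; i.e., along points where u = (2/ρ)R_x v, the augmented Lagrangian is bounded from below by 0. -/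
open scoped ComplexOrder

/-- Lemma 2, boundedness: If `R_x ≻ 0` with `λ_min(R_x) > 0` and
`ρ ≥ 2λ_max²(R_x)/λ_min(R_x)`, then for all `w, v`, taking `u = (2/ρ)R_x v`,
`L(w, v, u) ≥ 0`. -/
theorem admm_lagrangian_bounded_below
    {M : ℕ} (lam ρ : ℝ) (hlam : 0 ≤ lam) (hρ : 0 < ρ)
    (Rx : Matrix (Fin M) (Fin M) ℂ) (hRx : Rx.PosDef)
    (lmax lmin : ℝ)
    (hlmax : IsGreatest (Set.range hRx.1.eigenvalues) lmax)
    (hlmin : IsLeast (Set.range hRx.1.eigenvalues) lmin)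
    (hlmin_pos : 0 < lmin)
    (hρ_big : 2 * lmax ^ 2 / lmin ≤ ρ) :
    ∀ w v : EuclideanSpace ℂ (Fin M),
      0 ≤ lagr Rx lam ρ w v (((2 / ρ : ℝ) : ℂ) • mulVecE Rx v) := by
  classical
  intro w v
  have hT : mulVecE Rx v = Matrix.toEuclideanLin Rx v := by
    ext i
    simp [mulVecE, Matrix.toEuclideanLin_apply, Matrix.mulVec, dotProduct]
  set b := hRx.1.eigenvectorBasis with hb
  set μ := hRx.1.eigenvalues with hμ
  set c : Fin M → ℂ := fun i => b.repr v i with hc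
  have hTb : ∀ j, Matrix.toEuclideanLin Rx (b j) = (μ j : ℂ) • b j := by
    intro j
    have h := hRx.1.mulVec_eigenvectorBasis j
    ext i
    have h1 : (Matrix.toEuclideanLin Rx (b j)) i = (Rx.mulVec (b j)) i := rfl
    have h2 := congrFun h i
    rw [h1]
    simpa [Complex.real_smul] using h2
  have hTv : Matrix.toEuclideanLin Rx v = ∑ j, (c j * (μ j : ℂ)) • b j := by
    conv_lhs => rw [← b.sum_repr v]
    rw [map_sum]
    simp only [LinearMap.map_smul, hTb, smul_smul]
    rfl
  have hrepr : ∀ i, b.repr (Matrix.toEuclideanLin Rx v) i = c i * (μ i : ℂ) := by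
    intro i
    rw [hTv, map_sum]
    have hs : (∑ x, ((c x * (μ x : ℂ)) • b.repr (b x))) i
        = ∑ x, ((c x * (μ x : ℂ)) • b.repr (b x)) i := by
      rw [WithLp.ofLp_sum, Finset.sum_apply]
    simp only [map_smul] at *
    rw [hs]
    simp [b.repr_self, EuclideanSpace.single_apply]
  -- termwise complex computations
  have hterm : ∀ i, (starRingEnd ℂ) (c i * (μ i : ℂ)) * (c i * (μ i : ℂ))
      = ((μ i ^ 2 * Complex.normSq (c i) : ℝ) : ℂ) := by
    intro i
    simp only [Complex.ofReal_mul, Complex.ofReal_pow, Complex.normSq_eq_conj_mul_self,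
      map_mul, Complex.conj_ofReal]
    ring
  have hray : (inner ℂ v (Matrix.toEuclideanLin Rx v) : ℂ).re
      = ∑ i, μ i * Complex.normSq (c i) := by
    rw [← b.repr.inner_map_map v (Matrix.toEuclideanLin Rx v), PiLp.inner_apply,
      Complex.re_sum]
    refine Finset.sum_congr rfl fun i _ => ?_
    rw [hrepr]
    simp only [RCLike.inner_apply]
    have h1 : (starRingEnd ℂ) (c i) * (c i * (μ i : ℂ))
        = ((μ i * Complex.normSq (c i) : ℝ) : ℂ) := by
      simp only [Complex.ofReal_mul, Complex.normSq_eq_conj_mul_self,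
        Complex.conj_ofReal]
      ring
    rw [mul_comm, h1, Complex.ofReal_re]
  have hnorm : ‖Matrix.toEuclideanLin Rx v‖ ^ 2 = ∑ i, μ i ^ 2 * Complex.normSq (c i) := by
    rw [← inner_self_eq_norm_sq (𝕜 := ℂ)]
    rw [← b.repr.inner_map_map (Matrix.toEuclideanLin Rx v) (Matrix.toEuclideanLin Rx v),
      PiLp.inner_apply]
    simp only [RCLike.re_to_complex]
    rw [Complex.re_sum]
    refine Finset.sum_congr rfl fun i _ => ?_
    rw [hrepr]
    simp only [RCLike.inner_apply]
    rw [mul_comm, hterm, Complex.ofReal_re]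
  -- eigenvalue bounds
  have hμpos : ∀ i, 0 < μ i := hRx.eigenvalues_pos
  have hminmax : lmin ≤ lmax := hlmin.2 hlmax.1
  have hμlemax : ∀ i, μ i ≤ lmax := fun i => hlmax.2 ⟨i, rfl⟩
  have hmax_pos : 0 < lmax := lt_of_lt_of_le hlmin_pos hminmax
  have hρl : 2 * lmax ^ 2 ≤ ρ * lmin := (div_le_iff₀ hlmin_pos).mp hρ_big
  have hμ_half : ∀ i, μ i ≤ ρ / 2 := by
    intro i
    have hle : lmin ≤ μ i := hlmin.2 ⟨i, rfl⟩
    nlinarith [hμlemax i, hμpos i, mul_le_mul_of_nonneg_left hminmax hmax_pos.le]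
  -- key inequality
  have hkey : 2 / ρ * (‖Matrix.toEuclideanLin Rx v‖ ^ 2)
      ≤ (inner ℂ v (Matrix.toEuclideanLin Rx v) : ℂ).re := by
    rw [hray, hnorm, Finset.mul_sum]
    refine Finset.sum_le_sum fun i _ => ?_
    have hn : 0 ≤ Complex.normSq (c i) := Complex.normSq_nonneg _
    have h1 : 2 / ρ * μ i ≤ 1 := by
      rw [div_mul_eq_mul_div, div_le_one hρ]
      nlinarith [hμ_half i]
    calc 2 / ρ * (μ i ^ 2 * Complex.normSq (c i))
        = (2 / ρ * μ i) * (μ i * Complex.normSq (c i)) := by ring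
      _ ≤ 1 * (μ i * Complex.normSq (c i)) :=
          mul_le_mul_of_nonneg_right h1 (mul_nonneg (hμpos i).le hn)
      _ = μ i * Complex.normSq (c i) := one_mul _
  -- assemble
  have hnormu : ‖(((2 / ρ : ℝ) : ℂ) • Matrix.toEuclideanLin Rx v)‖ ^ 2
      = (2 / ρ) ^ 2 * ‖Matrix.toEuclideanLin Rx v‖ ^ 2 := by
    rw [norm_smul, mul_pow]
    congr 1
    rw [Complex.norm_real, Real.norm_eq_abs, abs_div, abs_two, abs_of_pos hρ]
  have h1 : 0 ≤ lam * ∑ i, ‖w i‖ :=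
    mul_nonneg hlam (Finset.sum_nonneg fun i _ => norm_nonneg _)
  have h2 : 0 ≤ ρ / 2 * ‖w - v + (((2 / ρ : ℝ) : ℂ) • Matrix.toEuclideanLin Rx v)‖ ^ 2 :=
    mul_nonneg (le_of_lt (by positivity : (0:ℝ) < ρ / 2)) (sq_nonneg _)
  have h3 : ρ / 2 * ((2 / ρ) ^ 2 * ‖Matrix.toEuclideanLin Rx v‖ ^ 2)
      = 2 / ρ * ‖Matrix.toEuclideanLin Rx v‖ ^ 2 := by
    field_simp
  unfold lagr
  rw [hT, mul_sub, hnormu, h3]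
  linarith [hkey, h1, h2]
end

section
/- (Theorem 2, KKT/stationarity at a fixed point) Let (w*, v*, u*) ∈ ℂ^M × ℂ^M × ℂ^M be a fixed point of the ADMM iteration for the sparse array beamforming problem; that is, (i) w* is a minimizer of w ↦ λ‖w‖₁ + (ρ/2)‖w − v* + u*‖₂² over {w : |⟨a₀, w⟩|² ≥ 1}; (ii) v* = ρ(2R_x + ρI)⁻¹(w* + u*); and (iii) u* = u* + w* − v*. Then, with the dual variable y* := ρu*, the following KKT-type conditions hold: (a) 2R_x v* = y*; (b) w* = v*; and (c) w* is a minimizer of w ↦ λ‖w‖₁ + Re⟨y*, w − v*⟩ + (ρ/2)‖w − w*‖₂² over the feasible set {w : |⟨a₀, w⟩|² ≥ 1}. -/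
open scoped ComplexOrder

/-- Theorem 2: A fixed point `(w*, v*, u*)` of the ADMM iteration satisfies,
with `y* = ρu*`, the KKT-type conditions: (a) `2R_x v* = y*`; (b) `w* = v*`; (c) `w*`
minimizes `w ↦ λ‖w‖₁ + Re⟨y*, w − v*⟩ + (ρ/2)‖w − w*‖₂²` over `{w : |⟨a₀, w⟩|² ≥ 1}`. -/
theorem admm_fixed_point_is_kkt
    {M : ℕ} (lam ρ : ℝ) (hlam : 0 < lam) (hρ : 0 < ρ)
    (Rx : Matrix (Fin M) (Fin M) ℂ) (hRx : Rx.PosSemidef)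
    (a0 : EuclideanSpace ℂ (Fin M)) (ha0 : a0 ≠ 0)
    (wstar vstar ustar ystar : EuclideanSpace ℂ (Fin M))
    (hy : ystar = (ρ : ℂ) • ustar)
    (hwfix : 1 ≤ ‖(inner ℂ a0 wstar : ℂ)‖ ^ 2 ∧
      ∀ x : EuclideanSpace ℂ (Fin M), 1 ≤ ‖(inner ℂ a0 x : ℂ)‖ ^ 2 →
        lam * ∑ i, ‖wstar i‖ + ρ / 2 * ‖wstar - vstar + ustar‖ ^ 2 ≤
        lam * ∑ i, ‖x i‖ + ρ / 2 * ‖x - vstar + ustar‖ ^ 2)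
    (hvfix : vstar = (ρ : ℂ) • mulVecE (2 • Rx + (ρ : ℂ) • 1)⁻¹ (wstar + ustar))
    (hufix : ustar = ustar + wstar - vstar) :
    (2 : ℂ) • mulVecE Rx vstar = ystar ∧
    wstar = vstar ∧
    ∀ x : EuclideanSpace ℂ (Fin M), 1 ≤ ‖(inner ℂ a0 x : ℂ)‖ ^ 2 →
      lam * ∑ i, ‖wstar i‖ + (inner ℂ ystar (wstar - vstar) : ℂ).re +
          ρ / 2 * ‖wstar - wstar‖ ^ 2 ≤
      lam * ∑ i, ‖x i‖ + (inner ℂ ystar (x - vstar) : ℂ).re +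
          ρ / 2 * ‖x - wstar‖ ^ 2 := by
  -- (b) wstar = vstar
  have heq : wstar = vstar := by
    have h : ustar + (wstar - vstar) = ustar := by
      rw [← add_sub_assoc]; exact hufix.symm
    exact sub_eq_zero.mp (add_eq_left.mp h)
  subst heq
  subst hy
  -- (a)
  set A : Matrix (Fin M) (Fin M) ℂ := 2 • Rx + (ρ : ℂ) • 1 with hA
  have hApos : A.PosDef := by
    refine Matrix.PosDef.posSemidef_add ?_ ?_
    · rw [two_smul]; exact hRx.add hRx
    · exact Matrix.PosDef.one.smul (by exact_mod_cast hρ)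
  have hdet : IsUnit A.det := (Matrix.isUnit_iff_isUnit_det A).mp hApos.isUnit
  have hmv : ∀ (B : Matrix (Fin M) (Fin M) ℂ) (x : EuclideanSpace ℂ (Fin M)),
      mulVecE B x = B.mulVec x := fun _ _ => by
    ext i; simp [mulVecE, Matrix.mulVec, dotProduct]
  have key : A.mulVec wstar = (ρ : ℂ) • (wstar + ustar) := by
    calc A.mulVec wstar
        = A.mulVec ((ρ : ℂ) • A⁻¹.mulVec (wstar + ustar)) := by
          conv_lhs => rw [hvfix]
          rw [WithLp.ofLp_smul, hmv, WithLp.ofLp_add]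
      _ = (ρ : ℂ) • (A * A⁻¹).mulVec (wstar + ustar) := by
          rw [Matrix.mulVec_smul, Matrix.mulVec_mulVec]
      _ = (ρ : ℂ) • (wstar + ustar) := by
          rw [Matrix.mul_nonsing_inv _ hdet, Matrix.one_mulVec]
  have ha : (2 : ℂ) • mulVecE Rx wstar = (ρ : ℂ) • ustar := by
    have e1 : (2 • Rx : Matrix (Fin M) (Fin M) ℂ).mulVec wstar
        = (2 : ℂ) • Rx.mulVec wstar := by
      rw [← Nat.cast_smul_eq_nsmul ℂ 2 Rx, Matrix.smul_mulVec]
      norm_num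
    have expand : A.mulVec wstar
        = (2 : ℂ) • Rx.mulVec wstar + (ρ : ℂ) • Matrix.mulVec 1 wstar := by
      rw [hA, Matrix.add_mulVec, e1, Matrix.smul_mulVec]
    rw [Matrix.one_mulVec] at expand
    have h2 := expand.symm.trans key
    rw [smul_add, add_comm ((ρ : ℂ) • wstar.ofLp)] at h2
    apply WithLp.ofLp_injective 2
    rw [WithLp.ofLp_smul, WithLp.ofLp_smul, hmv]
    exact add_right_cancel h2
  refine ⟨ha, rfl, ?_⟩
  -- (c)
  intro x hx
  have hbase := hwfix.2 x hx
  simp only [sub_self, zero_add] at hbase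
  simp only [sub_self, inner_zero_right, Complex.zero_re, norm_zero, add_zero]
  have hsplit : ‖x - wstar + ustar‖ ^ 2
      = ‖x - wstar‖ ^ 2 + 2 * (inner ℂ (x - wstar) ustar : ℂ).re + ‖ustar‖ ^ 2 := by
    have := norm_add_sq (𝕜 := ℂ) (x - wstar) ustar
    exact this
  have hinner : (inner ℂ ((ρ : ℂ) • ustar) (x - wstar) : ℂ).re
      = ρ * (inner ℂ (x - wstar) ustar : ℂ).re := by
    rw [inner_smul_left, Complex.conj_ofReal, Complex.re_ofReal_mul]
    congr 1
    rw [← inner_conj_symm]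
    simp only [Complex.conj_re]
  rw [hsplit] at hbase
  rw [hinner]
  nlinarith [hbase]
end
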